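/- The function g(r) = 2r(e^r − 1)·exp(∫₀ʳ (e^t − 1)/t dt) satisfies g(0.476) < 1 < g(0.477); in particular, the equation 2(e^r − 1)·r·exp(∫₀ʳ (e^t − 1)/t dt) = 1 has a root in the interval (0.476, 0.477). -/

import Mathlib

open MeasureTheory intervalIntegral Set

/-- Lower series bound for `exp`. -/
lemma exp_lb6 {x : ℝ} (hx : 0 ≤ x) :
    1 + x + x^2/2 + x^3/6 + x^4/24 + x^5/120 ≤ Real.exp x := by
  have h := Real.sum_le_exp_of_nonneg hx 6
  simp [Finset.sum_range_succ, Nat.factorial] at h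
  nlinarith [h]

/-- Upper series bound for `exp` with 6 terms. -/
lemma exp_ub6 {x : ℝ} (h0 : 0 ≤ x) (h1 : x ≤ 1) :
    Real.exp x ≤ 1 + x + x^2/2 + x^3/6 + x^4/24 + x^5/120 + 7*x^6/4320 := by
  have h := Real.exp_bound' h0 h1 (n := 6) (by norm_num)
  simp [Finset.sum_range_succ, Nat.factorial] at h
  nlinarith [h]

/-- Upper series bound for `exp` with 4 terms. -/
lemma exp_ub4 {x : ℝ} (h0 : 0 ≤ x) (h1 : x ≤ 1) :
    Real.exp x ≤ 1 + x + x^2/2 + x^3/6 + 5*x^4/96 := by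
  have h := Real.exp_bound' h0 h1 (n := 4) (by norm_num)
  simp [Finset.sum_range_succ, Nat.factorial] at h
  nlinarith [h]

/-- Integral of a cubic polynomial from 0 to r. -/
lemma integral_cubic (r a b c d : ℝ) :
    ∫ t in (0:ℝ)..r, (a + b*t + c*t^2 + d*t^3)
      = a*r + b*r^2/2 + c*r^3/3 + d*r^4/4 := by
  have hderiv : ∀ x ∈ Set.uIcc (0:ℝ) r,
      HasDerivAt (fun t : ℝ => a*t + b*t^2/2 + c*t^3/3 + d*t^4/4)
        (a + b*x + c*x^2 + d*x^3) x := by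
    intro x _
    have h1 : HasDerivAt (fun t : ℝ => t) 1 x := hasDerivAt_id x
    have h2 : HasDerivAt (fun t : ℝ => t^2) (2*x) x := by
      simpa using hasDerivAt_pow 2 x
    have h3 : HasDerivAt (fun t : ℝ => t^3) (3*x^2) x := by
      simpa using hasDerivAt_pow 3 x
    have h4 : HasDerivAt (fun t : ℝ => t^4) (4*x^3) x := by
      simpa using hasDerivAt_pow 4 x
    have := (((h1.const_mul a).add ((h2.const_mul b).div_const 2)).add
      ((h3.const_mul c).div_const 3)).add ((h4.const_mul d).div_const 4)
    exact this.congr_deriv (by ring)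
  have hint : IntervalIntegrable (fun x : ℝ => a + b*x + c*x^2 + d*x^3)
      MeasureTheory.volume 0 r := by
    apply Continuous.intervalIntegrable
    continuity
  have := intervalIntegral.integral_eq_sub_of_hasDerivAt hderiv hint
  rw [this]
  ring

/-- The integrand is integrable on `[0,1]`. -/
lemma integrand_integrableOn :
    IntegrableOn (fun t : ℝ => (Real.exp t - 1) / t) (Set.Icc (0:ℝ) 1) := by
  have hm : Measurable (fun t : ℝ => (Real.exp t - 1) / t) :=
    (Real.measurable_exp.sub measurable_const).div measurable_id
  apply MeasureTheory.Integrable.mono' (g := fun _ => (3:ℝ))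
    (MeasureTheory.integrable_const 3) hm.aestronglyMeasurable.restrict
  rw [MeasureTheory.ae_restrict_iff' measurableSet_Icc]
  filter_upwards with t ht
  rcases eq_or_lt_of_le ht.1 with h0 | h0
  · simp [← h0]
  · have hexp : (1:ℝ) ≤ Real.exp t := Real.one_le_exp (le_of_lt h0)
    have hnn : 0 ≤ (Real.exp t - 1) / t := div_nonneg (by linarith) h0.le
    rw [Real.norm_eq_abs, abs_of_nonneg hnn]
    have key : Real.exp t - 1 ≤ Real.exp t * t := by
      have h1 : -t + 1 ≤ Real.exp (-t) := Real.add_one_le_exp (-t)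
      rw [Real.exp_neg] at h1
      have h2 : 0 < Real.exp t := Real.exp_pos t
      rw [inv_eq_one_div, le_div_iff₀ h2] at h1
      nlinarith
    have h3 : Real.exp t ≤ 3 := by
      have := Real.exp_le_exp.mpr ht.2
      have h9 : Real.exp 1 < 2.7182818286 := Real.exp_one_lt_d9
      linarith
    calc (Real.exp t - 1) / t ≤ Real.exp t := by
          rw [div_le_iff₀ h0]; linarith [key]
      _ ≤ 3 := h3

lemma integrand_intervalIntegrable {r : ℝ} (h0 : 0 ≤ r) (h1 : r ≤ 1) :
    IntervalIntegrable (fun t : ℝ => (Real.exp t - 1) / t)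
      MeasureTheory.volume 0 r := by
  rw [intervalIntegrable_iff]
  apply integrand_integrableOn.mono_set
  rw [Set.uIoc_of_le h0]
  exact (Set.Ioc_subset_Icc_self).trans (Set.Icc_subset_Icc le_rfl h1)

/-- Lower bound for the integral. -/
lemma integral_lb {r : ℝ} (h0 : 0 < r) (h1 : r ≤ 1) :
    r + r^2/4 + r^3/18 + r^4/96 ≤ ∫ t in (0:ℝ)..r, (Real.exp t - 1) / t := by
  have key : (∫ t in (0:ℝ)..r, (1 + (1/2)*t + (1/6)*t^2 + (1/24)*t^3))
      ≤ ∫ t in (0:ℝ)..r, (Real.exp t - 1) / t := by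
    apply intervalIntegral.integral_mono_ae_restrict h0.le
    · apply Continuous.intervalIntegrable; continuity
    · exact integrand_intervalIntegrable h0.le h1
    · have hz : ∀ᵐ t : ℝ, t ∉ ({0} : Set ℝ) :=
        MeasureTheory.compl_mem_ae_iff.mpr (measure_singleton 0)
      filter_upwards [MeasureTheory.ae_restrict_of_ae hz,
        MeasureTheory.ae_restrict_mem measurableSet_Icc] with t htz htm
      have ht0 : 0 < t := lt_of_le_of_ne htm.1 (fun h => htz (by simp [← h]))
      rw [le_div_iff₀ ht0]
      have hle := exp_lb6 ht0.le
      have h5 : 0 ≤ t^5 := by positivity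
      nlinarith
  rw [integral_cubic r 1 (1/2) (1/6) (1/24)] at key
  linarith

/-- Upper bound for the integral. -/
lemma integral_ub {r : ℝ} (h0 : 0 < r) (h1 : r ≤ 1) :
    (∫ t in (0:ℝ)..r, (Real.exp t - 1) / t) ≤ r + r^2/4 + r^3/18 + 5*r^4/384 := by
  have key : (∫ t in (0:ℝ)..r, (Real.exp t - 1) / t)
      ≤ ∫ t in (0:ℝ)..r, (1 + (1/2)*t + (1/6)*t^2 + (5/96)*t^3) := by
    apply intervalIntegral.integral_mono_ae_restrict h0.le
    · exact integrand_intervalIntegrable h0.le h1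
    · apply Continuous.intervalIntegrable; continuity
    · have hz : ∀ᵐ t : ℝ, t ∉ ({0} : Set ℝ) :=
        MeasureTheory.compl_mem_ae_iff.mpr (measure_singleton 0)
      filter_upwards [MeasureTheory.ae_restrict_of_ae hz,
        MeasureTheory.ae_restrict_mem measurableSet_Icc] with t htz htm
      have ht0 : 0 < t := lt_of_le_of_ne htm.1 (fun h => htz (by simp [← h]))
      rw [div_le_iff₀ ht0]
      have hle := exp_ub4 ht0.le (htm.2.trans h1)
      nlinarith
  rw [integral_cubic r 1 (1/2) (1/6) (5/96)] at key
  linarith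

/-- The function g(r) = 2r(e^r − 1)exp(∫₀ʳ (e^t − 1)/t dt) satisfies g(0.476) < 1 < g(0.477),
so the equation g(r) = 1 has a root in (0.476, 0.477). -/
theorem root_location_Se :
    let g : ℝ → ℝ := fun r =>
      2 * r * (Real.exp r - 1) * Real.exp (∫ t in (0:ℝ)..r, (Real.exp t - 1) / t)
    g 0.476 < 1 ∧ 1 < g 0.477 ∧ ∃ r ∈ Set.Ioo (0.476 : ℝ) 0.477, g r = 1 := by
  intro g
  -- upper bound at 0.476
  have hga : g 0.476 < 1 := by
    have hIub : (∫ t in (0:ℝ)..(0.476:ℝ), (Real.exp t - 1) / t) ≤ 0.53931 := by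
      have := integral_ub (r := 0.476) (by norm_num) (by norm_num)
      have h2 : (0.476:ℝ) + 0.476^2/4 + 0.476^3/18 + 5*0.476^4/384 ≤ 0.53931 := by
        norm_num
      linarith
    have hIlb : (0:ℝ) ≤ ∫ t in (0:ℝ)..(0.476:ℝ), (Real.exp t - 1) / t := by
      have := integral_lb (r := 0.476) (by norm_num) (by norm_num)
      nlinarith [this]
    set I := ∫ t in (0:ℝ)..(0.476:ℝ), (Real.exp t - 1) / t with hI
    have hEI : Real.exp I ≤ 1 + 0.53931 + 0.53931^2/2 + 0.53931^3/6 + 0.53931^4/24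
        + 0.53931^5/120 + 7*0.53931^6/4320 := by
      calc Real.exp I ≤ Real.exp 0.53931 := Real.exp_le_exp.mpr hIub
        _ ≤ _ := exp_ub6 (by norm_num) (by norm_num)
    have hEr : Real.exp 0.476 - 1 ≤ 0.476 + 0.476^2/2 + 0.476^3/6 + 0.476^4/24
        + 0.476^5/120 + 7*0.476^6/4320 := by
      have := exp_ub6 (x := 0.476) (by norm_num) (by norm_num)
      linarith
    have hErpos : 0 ≤ Real.exp 0.476 - 1 := by
      have := Real.one_le_exp (x := (0.476:ℝ)) (by norm_num); linarith
    have hEIpos : 0 < Real.exp I := Real.exp_pos I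
    show 2 * 0.476 * (Real.exp 0.476 - 1) * Real.exp I < 1
    calc 2 * 0.476 * (Real.exp 0.476 - 1) * Real.exp I
        ≤ 2 * 0.476 * (0.476 + 0.476^2/2 + 0.476^3/6 + 0.476^4/24
            + 0.476^5/120 + 7*0.476^6/4320)
          * (1 + 0.53931 + 0.53931^2/2 + 0.53931^3/6 + 0.53931^4/24
            + 0.53931^5/120 + 7*0.53931^6/4320) := by
          gcongr
      _ < 1 := by norm_num
  -- lower bound at 0.477
  have hgb : 1 < g 0.477 := by
    have hIlb : (0.54045:ℝ) ≤ ∫ t in (0:ℝ)..(0.477:ℝ), (Real.exp t - 1) / t := by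
      have := integral_lb (r := 0.477) (by norm_num) (by norm_num)
      have h2 : (0.54045:ℝ) ≤ 0.477 + 0.477^2/4 + 0.477^3/18 + 0.477^4/96 := by
        norm_num
      linarith
    set I := ∫ t in (0:ℝ)..(0.477:ℝ), (Real.exp t - 1) / t with hI
    have hEI : 1 + 0.54045 + 0.54045^2/2 + 0.54045^3/6 + 0.54045^4/24
        + 0.54045^5/120 ≤ Real.exp I := by
      calc (1:ℝ) + 0.54045 + 0.54045^2/2 + 0.54045^3/6 + 0.54045^4/24 + 0.54045^5/120
          ≤ Real.exp 0.54045 := exp_lb6 (by norm_num)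
        _ ≤ Real.exp I := Real.exp_le_exp.mpr hIlb
    have hEr : (0.477:ℝ) + 0.477^2/2 + 0.477^3/6 + 0.477^4/24 + 0.477^5/120
        ≤ Real.exp 0.477 - 1 := by
      have := exp_lb6 (x := 0.477) (by norm_num)
      linarith
    show 1 < 2 * 0.477 * (Real.exp 0.477 - 1) * Real.exp I
    calc (1:ℝ) < 2 * 0.477 * (0.477 + 0.477^2/2 + 0.477^3/6 + 0.477^4/24 + 0.477^5/120)
          * (1 + 0.54045 + 0.54045^2/2 + 0.54045^3/6 + 0.54045^4/24
            + 0.54045^5/120) := by norm_num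
      _ ≤ 2 * 0.477 * (Real.exp 0.477 - 1) * Real.exp I := by
          gcongr
  -- existence of root via IVT
  refine ⟨hga, hgb, ?_⟩
  have hcont : ContinuousOn g (Set.Icc (0.476:ℝ) 0.477) := by
    have hprim : ContinuousOn (fun x : ℝ => ∫ t in (0:ℝ)..x, (Real.exp t - 1) / t)
        (Set.uIcc (0:ℝ) 1) := by
      apply intervalIntegral.continuousOn_primitive_interval
      rw [Set.uIcc_of_le (by norm_num : (0:ℝ) ≤ 1)]
      exact integrand_integrableOn
    have hprim' : ContinuousOn (fun x : ℝ => ∫ t in (0:ℝ)..x, (Real.exp t - 1) / t)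
        (Set.Icc (0.476:ℝ) 0.477) := by
      apply hprim.mono
      rw [Set.uIcc_of_le (by norm_num : (0:ℝ) ≤ 1)]
      intro x hx
      exact ⟨by linarith [hx.1], by linarith [hx.2]⟩
    exact ((continuous_const.mul continuous_id).continuousOn.mul
      ((Real.continuous_exp.continuousOn).sub continuousOn_const)).mul
      (Real.continuous_exp.comp_continuousOn hprim')
  have hsub : Set.Ioo (g 0.476) (g 0.477) ⊆ g '' Set.Ioo 0.476 0.477 :=
    intermediate_value_Ioo (by norm_num) hcont
  obtain ⟨r, hr, hgr⟩ := hsub ⟨hga, hgb⟩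
  exact ⟨r, hr, hgr⟩
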